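/- Let τ > 0, ε ≥ 0, 0 ≤ η < 1 with τε ≤ 1, speed limits v_min ≤ v_max, and acceleration limits a_min ≤ a_max satisfying ε·v_min − η·a_min < (1 − η)·a_max. If v ≥ v_min and u_prev ≥ a_min, then a_lo = (v_min − (1 − τε)v − τη·u_prev)/(τ(1 − η)) satisfies a_lo < a_max. -/
import Mathlib

/-- the lower speed-limit control bound `a_lo` is strictly
below the maximum acceleration `a_max`. -/
theorem a_lo_lt_a_max
    (τ ε η vmin vmax amin amax v uprev : ℝ)
    (hτ : 0 < τ) (hε : 0 ≤ ε) (hη0 : 0 ≤ η) (hη1 : η < 1)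
    (hτε : τ * ε ≤ 1) (hv : vmin ≤ vmax) (ha : amin ≤ amax)
    (hcond : ε * vmin - η * amin < (1 - η) * amax)
    (hvlb : vmin ≤ v) (huprev : amin ≤ uprev) :
    (vmin - (1 - τ * ε) * v - τ * η * uprev) / (τ * (1 - η)) < amax := by
  rw [div_lt_iff₀ (mul_pos hτ (by linarith))]
  nlinarith [mul_le_mul_of_nonneg_left huprev (mul_nonneg hτ.le hη0),
    mul_le_mul_of_nonneg_left hvlb (by nlinarith : (0:ℝ) ≤ 1 - τ * ε),
    mul_lt_mul_of_pos_left hcond hτ]
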